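/- Let U ⊆ ℝ^N be open, α a smooth 1-form on U, Z a smooth vector field on U with i_Z dα = 0 (i.e., dα(x)(Z(x), v) = 0 for all x, v), β a closed smooth 1-form on U, f : U → ℝ smooth, and ζ a smooth vector field with L_ζ(α + β) = df. Then the function J(x) = (α+β)(x)(ζ(x)) − f(x) is a first integral of the equation ẋ = Z: dJ(x)(Z(x)) = 0 for all x ∈ U. -/

import Mathlib

noncomputable section
open scoped ContDiff

/-- The Lie derivative of a 1-form `α` on `ℝ^N` along a vector field `ζ`:
`(L_ζ α)(x)(v) = (Dα(x)(ζ(x)))(v) + α(x)(Dζ(x)(v))`. -/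
def lieDerivV {N : ℕ} (ζ : (Fin N → ℝ) → (Fin N → ℝ))
    (α : (Fin N → ℝ) → ((Fin N → ℝ) →L[ℝ] ℝ)) (x : Fin N → ℝ) :
    (Fin N → ℝ) →L[ℝ] ℝ :=
  fderiv ℝ α x (ζ x) + (α x).comp (fderiv ℝ ζ x)

/-- The exterior derivative of a 1-form on `ℝ^N`:
`dα(x)(u,v) = (Dα(x)u)(v) − (Dα(x)v)(u)`. -/
def extDerivV {N : ℕ} (α : (Fin N → ℝ) → ((Fin N → ℝ) →L[ℝ] ℝ)) (x u v : Fin N → ℝ) : ℝ :=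
  fderiv ℝ α x u v - fderiv ℝ α x v u

/-- if `Z` is a section of the characteristic line bundle of `dα`
(`i_Z dα = 0` on `U`) and `ζ` is a weak Noether symmetry (`L_ζ(α + β) = df` on `U`,
`β` closed), then `J(x) = (α+β)(x)(ζ(x)) − f(x)` is a first integral of `ẋ = Z`. -/
theorem weak_noether_first_integral_char_bundle {N : ℕ} (hN : 1 ≤ N)
    (U : Set (Fin N → ℝ)) (hU : IsOpen U)
    (α β : (Fin N → ℝ) → ((Fin N → ℝ) →L[ℝ] ℝ))
    (Z ζ : (Fin N → ℝ) → (Fin N → ℝ)) (f : (Fin N → ℝ) → ℝ)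
    (hα : ContDiffOn ℝ ∞ α U) (hβ : ContDiffOn ℝ ∞ β U)
    (hZ : ContDiffOn ℝ ∞ Z U) (hζ : ContDiffOn ℝ ∞ ζ U) (hf : ContDiffOn ℝ ∞ f U)
    (hZker : ∀ x ∈ U, ∀ v, extDerivV α x (Z x) v = 0)
    (hβclosed : ∀ x ∈ U, ∀ u v, extDerivV β x u v = 0)
    (hsym : ∀ x ∈ U, lieDerivV ζ (fun y => α y + β y) x = fderiv ℝ f x) :
    ∀ x ∈ U, fderiv ℝ (fun y => (α y + β y) (ζ y) - f y) x (Z x) = 0 := by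
  intro x hx
  have hmem := hU.mem_nhds hx
  have hαx : DifferentiableAt ℝ α x := (hα.contDiffAt hmem).differentiableAt (by simp)
  have hβx : DifferentiableAt ℝ β x := (hβ.contDiffAt hmem).differentiableAt (by simp)
  have hζx : DifferentiableAt ℝ ζ x := (hζ.contDiffAt hmem).differentiableAt (by simp)
  have hfx : DifferentiableAt ℝ f x := (hf.contDiffAt hmem).differentiableAt (by simp)
  have hγx : DifferentiableAt ℝ (fun y => α y + β y) x := hαx.add hβx
  have hγζ : DifferentiableAt ℝ (fun y => (α y + β y) (ζ y)) x := hγx.clm_apply hζx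
  have hfd : fderiv ℝ (fun y => (α y + β y) (ζ y) - f y) x
      = fderiv ℝ (fun y => (α y + β y) (ζ y)) x - fderiv ℝ f x := fderiv_sub hγζ hfx
  have hfd2 : fderiv ℝ (fun y => (α y + β y) (ζ y)) x
      = (α x + β x).comp (fderiv ℝ ζ x)
        + (fderiv ℝ (fun y => α y + β y) x).flip (ζ x) := fderiv_clm_apply hγx hζx
  have hgadd : fderiv ℝ (fun y => α y + β y) x = fderiv ℝ α x + fderiv ℝ β x :=
    fderiv_add hαx hβx
  have hsymx := hsym x hx
  rw [lieDerivV] at hsymx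
  rw [hfd, ContinuousLinearMap.sub_apply, ← hsymx, hfd2]
  simp only [ContinuousLinearMap.add_apply, ContinuousLinearMap.flip_apply,
    ContinuousLinearMap.comp_apply, hgadd, ContinuousLinearMap.coe_sum']
  have h1 := hZker x hx (ζ x)
  have h2 := hβclosed x hx (Z x) (ζ x)
  rw [extDerivV] at h1 h2
  ring_nf
  linarith [h1, h2]
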